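/- Let λ : ℕ → ℝ be a summable sequence with λ_k ≥ 0 for all k and λ_max := sup_k λ_k > 0, let τ ∈ (0, 1], γ ∈ (0, 1], and ζ > 0. Define Ũ₁(α, β) = Σ_k γαλ_k(β + 1)/(αβτγλ_k + αβλ_k + ατγλ_k − αλ_k − 2β² + 2). Suppose α_max ∈ (0, 2/λ_max] satisfies Ũ₁(α_max, 0) = 1, and let α* ∈ (0, α_max) be the unique minimizer of α ↦ α^{−ζ}/(1 − Ũ₁(α, 0)) on (0, α_max). Then there exists d < 0 such that the function β ↦ (1 − β)^{ζ}/(1 − Ũ₁(α*, β)) has derivative d at β = 0 (in the sense of HasDerivAt). -/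

import Mathlib

open Filter

theorem my_tsum_deriv {s : Set ℝ} (hs : IsOpen s) {x₀ : ℝ} (hx₀ : x₀ ∈ s)
    (f f' : ℕ → ℝ → ℝ) (u : ℕ → ℝ) (hu : Summable u)
    (hderiv : ∀ k, ∀ x ∈ s, HasDerivAt (f k) (f' k x) x)
    (hbound : ∀ k, ∀ x ∈ s, |f' k x| ≤ u k)
    (hsummf : ∀ x ∈ s, Summable (fun k => f k x)) :
    HasDerivAt (fun x => ∑' k, f k x) (∑' k, f' k x₀) x₀ := by
  apply hasDerivAt_of_tendstoUniformlyOn (f := fun (t : Finset ℕ) x => ∑ k ∈ t, f k x)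
    (f' := fun (t : Finset ℕ) x => ∑ k ∈ t, f' k x) hs
    (tendstoUniformlyOn_tsum hu (fun k x hx => by
      simpa using hbound k x hx))
    (by
      filter_upwards with t x hx
      exact HasDerivAt.fun_sum fun k _ => hderiv k x hx)
    (fun x hx => (hsummf x hx).hasSum) hx₀

set_option maxHeartbeats 1600000 in
/-- Positive momentum is beneficial in the signal-dominated phase: at the
`β = 0` optimal learning rate `α*`, the approximate late-time loss
`β ↦ (1−β)^ζ/(1 − Ũ₁(α*, β))` has a strictly negative derivative at `β = 0`,
where `Ũ₁(α, β) = Σ_k γαλ_k(β+1)/(αβτγλ_k + αβλ_k + ατγλ_k − αλ_k − 2β² + 2)`. -/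
theorem signal_momentum_beneficial
    (lam : ℕ → ℝ) (hlam : ∀ k, 0 ≤ lam k) (hsum : Summable lam)
    (hmaxpos : 0 < ⨆ k, lam k)
    (τ γ ζ : ℝ) (hτ₁ : 0 < τ) (hτ₂ : τ ≤ 1) (hγ₁ : 0 < γ) (hγ₂ : γ ≤ 1) (hζ : 0 < ζ)
    (U1 : ℝ → ℝ → ℝ)
    (hU1 : ∀ α β, U1 α β = ∑' k, γ * α * lam k * (β + 1) /
        (α * β * τ * γ * lam k + α * β * lam k + α * τ * γ * lam k
          - α * lam k - 2 * β ^ 2 + 2))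
    (αmax : ℝ) (hαmax : αmax ∈ Set.Ioc 0 (2 / ⨆ k, lam k))
    (hUmax : U1 αmax 0 = 1)
    (αstar : ℝ) (hstar_mem : αstar ∈ Set.Ioo 0 αmax)
    (hstar_min : ∀ α ∈ Set.Ioo 0 αmax, α ≠ αstar →
        αstar ^ (-ζ) / (1 - U1 αstar 0) < α ^ (-ζ) / (1 - U1 α 0)) :
    ∃ d : ℝ, d < 0 ∧
      HasDerivAt (fun β : ℝ => (1 - β) ^ ζ / (1 - U1 αstar β)) d 0 := by
  obtain ⟨hα0, hαle⟩ := hαmax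
  obtain ⟨hA0, hAlt⟩ := hstar_mem
  set Λ := ⨆ k, lam k with hΛdef
  have hΛ0 : 0 < Λ := hmaxpos
  have hτγ0 : 0 < τ * γ := mul_pos hτ₁ hγ₁
  have hτγ1 : τ * γ ≤ 1 := by nlinarith
  have hbdd : BddAbove (Set.range lam) := hsum.tendsto_atTop_zero.bddAbove_range
  have hleΛ : ∀ k, lam k ≤ Λ := fun k => le_ciSup hbdd k
  have hαmaxΛ : αmax * Λ ≤ 2 := by
    rw [← le_div_iff₀ hΛ0] at *; exact hαle
  -- a uniform product bound
  have hprod2 : ∀ α, 0 ≤ α → α ≤ αmax → ∀ k, α * lam k ≤ 2 := by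
    intro α h0 hle k
    have h1 : α * lam k ≤ αmax * Λ :=
      mul_le_mul hle (hleΛ k) (hlam k) hα0.le
    linarith
  set δ : ℝ := 2 - αstar * Λ with hδdef
  have hδ0 : 0 < δ := by
    have : αstar * Λ < αmax * Λ := mul_lt_mul_of_pos_right hAlt hΛ0
    simp only [hδdef]; linarith
  have hδ2 : δ ≤ 2 := by
    have : 0 ≤ αstar * Λ := mul_nonneg hA0.le hΛ0.le
    simp only [hδdef]; linarith
  have hAk : ∀ k, αstar * lam k ≤ 2 - δ := by
    intro k
    have := mul_le_mul_of_nonneg_left (hleΛ k) hA0.le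
    simp only [hδdef]; linarith
  have hAk0 : ∀ k, 0 ≤ αstar * lam k := fun k => mul_nonneg hA0.le (hlam k)
  -- the β = 0 denominators
  set D0 : ℕ → ℝ := fun k => αstar * τ * γ * lam k - αstar * lam k + 2 with hD0def
  have hτγk : ∀ k, αstar * τ * γ * lam k ≤ αstar * lam k := by
    intro k
    have h := hAk0 k
    nlinarith [hAk0 k]
  have hτγk0 : ∀ k, 0 ≤ αstar * τ * γ * lam k := fun k =>
    mul_nonneg (mul_nonneg (mul_nonneg hA0.le hτ₁.le) hγ₁.le) (hlam k)
  have hD0δ : ∀ k, δ ≤ D0 k := by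
    intro k; have := hτγk0 k; have := hAk k
    simp only [hD0def]; linarith
  have hD0pos : ∀ k, 0 < D0 k := fun k => lt_of_lt_of_le hδ0 (hD0δ k)
  -- denominators for general α ∈ (0, αmax]
  have hDpos : ∀ α, 0 ≤ α → α ≤ αmax → ∀ k,
      2 * (τ * γ) ≤ α * τ * γ * lam k - α * lam k + 2 := by
    intro α h0 hle k
    have h2 := hprod2 α h0 hle k
    have h3 : 0 ≤ α * lam k := mul_nonneg h0 (hlam k)
    nlinarith
  have h2τγ : 0 < 2 * (τ * γ) := by linarith
  -- g is U1 · 0 termwise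
  set g : ℕ → ℝ → ℝ := fun k α => γ * α * lam k / (α * τ * γ * lam k - α * lam k + 2)
    with hgdef
  have hV : ∀ α, U1 α 0 = ∑' k, g k α := by
    intro α
    rw [hU1]
    apply tsum_congr
    intro k
    simp only [hgdef]
    norm_num
  -- summability of g
  have hbsum : Summable (fun k => γ * αmax * lam k / (2 * (τ * γ))) :=
    (hsum.mul_left (γ * αmax / (2 * (τ * γ)))).congr (fun k => by ring)
  have hgsum : ∀ α, 0 ≤ α → α ≤ αmax → Summable (fun k => g k α) := by
    intro α h0 hle
    refine Summable.of_nonneg_of_le (fun k => ?_) (fun k => ?_) hbsum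
    · simp only [hgdef]
      refine div_nonneg ?_ (by nlinarith [hDpos α h0 hle k])
      exact mul_nonneg (mul_nonneg hγ₁.le h0) (hlam k)
    · simp only [hgdef]
      have hd := hDpos α h0 hle k
      have hnn : 0 ≤ γ * α * lam k := mul_nonneg (mul_nonneg hγ₁.le h0) (hlam k)
      calc γ * α * lam k / (α * τ * γ * lam k - α * lam k + 2)
          ≤ γ * α * lam k / (2 * (τ * γ)) :=
            div_le_div_of_nonneg_left hnn h2τγ hd
        _ ≤ γ * αmax * lam k / (2 * (τ * γ)) := by
            exact (div_le_div_iff_of_pos_right h2τγ).mpr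
              (mul_le_mul_of_nonneg_right (mul_le_mul_of_nonneg_left hle hγ₁.le) (hlam k))
  -- an index with positive eigenvalue
  obtain ⟨k₀, hk₀⟩ : ∃ k, 0 < lam k := by
    by_contra h
    push_neg at h
    have : Λ ≤ 0 := ciSup_le (fun k => h k)
    linarith
  -- U1 αstar 0 < 1
  have hUlt1 : U1 αstar 0 < 1 := by
    rw [hV αstar, ← hUmax, hV αmax]
    refine Summable.tsum_lt_tsum (i := k₀) (fun k => ?_) ?_
      (hgsum αstar hA0.le hAlt.le) (hgsum αmax hα0.le le_rfl)
    · simp only [hgdef]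
      have hd1 := hDpos αstar hA0.le hAlt.le k
      have hd2 := hDpos αmax hα0.le le_rfl k
      rw [div_le_div_iff₀ (by linarith) (by linarith)]
      nlinarith [mul_nonneg (mul_nonneg hγ₁.le (hlam k))
        (by linarith : (0:ℝ) ≤ αmax - αstar)]
    · simp only [hgdef]
      have hd1 := hDpos αstar hA0.le hAlt.le k₀
      have hd2 := hDpos αmax hα0.le le_rfl k₀
      rw [div_lt_div_iff₀ (by linarith) (by linarith)]
      nlinarith [mul_pos (mul_pos hγ₁ hk₀) (by linarith : (0:ℝ) < αmax - αstar)]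
  have h1U : 0 < 1 - U1 αstar 0 := by linarith
  -- α-derivative of V := U1 · 0
  have hsαopen : IsOpen (Set.Ioo (0:ℝ) αmax) := isOpen_Ioo
  have hAmem : αstar ∈ Set.Ioo (0:ℝ) αmax := ⟨hA0, hAlt⟩
  set g' : ℕ → ℝ → ℝ :=
    fun k α => 2 * γ * lam k / (α * τ * γ * lam k - α * lam k + 2)^2 with hg'def
  have hg'deriv : ∀ k, ∀ α ∈ Set.Ioo (0:ℝ) αmax, HasDerivAt (g k) (g' k α) α := by
    intro k α hα
    have hd := hDpos α hα.1.le hα.2.le k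
    have hDp : 0 < α * τ * γ * lam k - α * lam k + 2 := by linarith
    have hnum : HasDerivAt (fun α : ℝ => γ * α * lam k) (γ * lam k) α := by
      have h : HasDerivAt (fun y : ℝ => (γ * lam k) * y) (γ * lam k) α := by
        simpa using (hasDerivAt_id α).const_mul (γ * lam k)
      exact h.congr_of_eventuallyEq (Filter.Eventually.of_forall fun y => by ring)
    have hden : HasDerivAt (fun α : ℝ => α * τ * γ * lam k - α * lam k + 2)
        (τ * γ * lam k - lam k) α := by
      have h : HasDerivAt (fun y : ℝ => (τ * γ * lam k - lam k) * y + 2)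
          (τ * γ * lam k - lam k) α := by
        simpa using ((hasDerivAt_id α).const_mul (τ * γ * lam k - lam k)).add_const 2
      exact h.congr_of_eventuallyEq (Filter.Eventually.of_forall fun y => by ring)
    have hdiv := hnum.fun_div hden hDp.ne'
    simp only [hgdef, hg'def]
    refine hdiv.congr_deriv ?_
    rw [div_eq_div_iff (by positivity) (by positivity)]
    ring
  have hbsum' : Summable (fun k => 2 * γ * lam k / (2 * (τ * γ))^2) :=
    (hsum.mul_left (2 * γ / (2 * (τ * γ))^2)).congr (fun k => by ring)
  have hg'bound : ∀ k, ∀ α ∈ Set.Ioo (0:ℝ) αmax,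
      |g' k α| ≤ 2 * γ * lam k / (2 * (τ * γ))^2 := by
    intro k α hα
    have hd := hDpos α hα.1.le hα.2.le k
    have hDp : 0 < α * τ * γ * lam k - α * lam k + 2 := by linarith
    have hnn : 0 ≤ 2 * γ * lam k := mul_nonneg (by positivity) (hlam k)
    have h1 : (0:ℝ) < (2 * (τ * γ))^2 := by positivity
    have h2 : (2 * (τ * γ))^2 ≤ (α * τ * γ * lam k - α * lam k + 2)^2 :=
      pow_le_pow_left₀ h2τγ.le hd 2
    simp only [hg'def]
    rw [abs_of_nonneg (div_nonneg (mul_nonneg (by positivity) (hlam k)) (by positivity))]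
    exact div_le_div_of_nonneg_left hnn h1 h2
  set Vα' : ℝ := ∑' k, g' k αstar with hVα'def
  have hVA : HasDerivAt (fun α => U1 α 0) Vα' αstar := by
    have he : (fun α => U1 α 0) = fun α => ∑' k, g k α := funext hV
    rw [he, hVα'def]
    exact my_tsum_deriv hsαopen hAmem g g' _ hbsum' hg'deriv hg'bound
      (fun α hα => hgsum α hα.1.le hα.2.le)
  -- first-order condition at the interior minimum
  have hmin : IsLocalMin (fun α => α ^ (-ζ) / (1 - U1 α 0)) αstar := by
    have hmem : Set.Ioo (0:ℝ) αmax ∈ nhds αstar := Ioo_mem_nhds hA0 hAlt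
    filter_upwards [hmem] with α hα
    rcases eq_or_ne α αstar with rfl | hne
    · exact le_rfl
    · exact (hstar_min α hα hne).le
  have hnumd : HasDerivAt (fun α : ℝ => α ^ (-ζ)) (-ζ * αstar ^ (-ζ - 1)) αstar := by
    simpa using Real.hasDerivAt_rpow_const (p := -ζ) (Or.inl hA0.ne')
  have hdend : HasDerivAt (fun α => 1 - U1 α 0) (-Vα') αstar := by
    simpa using (hasDerivAt_const αstar (1:ℝ)).fun_sub hVA
  have hdiv := hnumd.div hdend h1U.ne'
  have hzero := hmin.hasDerivAt_eq_zero hdiv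
  have hrp : αstar ^ (-ζ - 1) = αstar ^ (-ζ) * αstar⁻¹ := by
    rw [show (-ζ - 1) = (-ζ) + (-1) by ring, Real.rpow_add hA0, Real.rpow_neg_one]
  have hrpos : 0 < αstar ^ (-ζ) := Real.rpow_pos_of_pos hA0 _
  have hnum0 : -ζ * αstar ^ (-ζ - 1) * (1 - U1 αstar 0) + αstar ^ (-ζ) * Vα' = 0 := by
    have h2 : (1 - U1 αstar 0)^2 ≠ 0 := pow_ne_zero _ h1U.ne'
    rw [div_eq_zero_iff] at hzero
    rcases hzero with h | h
    · linarith
    · exact absurd h h2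
  have hFOC : αstar * Vα' = ζ * (1 - U1 αstar 0) := by
    rw [hrp] at hnum0
    have key : αstar ^ (-ζ) * (Vα' - ζ * αstar⁻¹ * (1 - U1 αstar 0)) = 0 := by
      linear_combination hnum0
    have h1 := (mul_eq_zero.mp key).resolve_left hrpos.ne'
    have h2 : Vα' = ζ * αstar⁻¹ * (1 - U1 αstar 0) := sub_eq_zero.mp h1
    rw [h2]
    field_simp
  -- β-direction setup
  set ε : ℝ := min (δ / 12) 1 with hεdef
  have hε0 : 0 < ε := lt_min (by linarith) one_pos
  have hεδ : ε ≤ δ / 12 := min_le_left _ _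
  have hε1 : ε ≤ 1 := min_le_right _ _
  have hsopen : IsOpen (Metric.ball (0:ℝ) ε) := Metric.isOpen_ball
  have h0mem : (0:ℝ) ∈ Metric.ball (0:ℝ) ε := Metric.mem_ball_self hε0
  have hmemball : ∀ β : ℝ, β ∈ Metric.ball (0:ℝ) ε → |β| < ε := by
    intro β hβ; simpa [Real.dist_eq] using hβ
  set fb : ℕ → ℝ → ℝ := fun k β => γ * αstar * lam k * (β + 1) /
      (αstar * β * τ * γ * lam k + αstar * β * lam k + αstar * τ * γ * lam k
        - αstar * lam k - 2 * β ^ 2 + 2) with hfbdef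
  set fb' : ℕ → ℝ → ℝ := fun k β =>
      (γ * αstar * lam k * (αstar * β * τ * γ * lam k + αstar * β * lam k
          + αstar * τ * γ * lam k - αstar * lam k - 2 * β ^ 2 + 2)
        - γ * αstar * lam k * (β + 1) * (αstar * τ * γ * lam k + αstar * lam k - 4 * β)) /
      (αstar * β * τ * γ * lam k + αstar * β * lam k + αstar * τ * γ * lam k
        - αstar * lam k - 2 * β ^ 2 + 2) ^ 2 with hfb'def
  -- uniform lower bound on the β-denominators over the ball
  have hDb : ∀ k, ∀ β : ℝ, |β| < ε → δ / 2 ≤ αstar * β * τ * γ * lam k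
      + αstar * β * lam k + αstar * τ * γ * lam k - αstar * lam k - 2 * β ^ 2 + 2 := by
    intro k β hβ
    obtain ⟨hβl, hβu⟩ := abs_lt.mp hβ
    have ha := hAk k; have ha0 := hAk0 k
    have hb := hτγk k; have hb0 := hτγk0 k
    have hsq : β ^ 2 < ε ^ 2 := sq_lt_sq' hβl hβu
    have hεsq : ε ^ 2 ≤ ε := by nlinarith [hε0, hε1]
    nlinarith [mul_le_mul_of_nonneg_right hβl.le hb0,
      mul_le_mul_of_nonneg_right hβl.le ha0,
      mul_le_mul_of_nonneg_left (hb.trans ha) hε0.le,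
      mul_le_mul_of_nonneg_left ha hε0.le,
      mul_nonneg hε0.le hδ0.le]
  -- derivatives of each term
  have hfbderiv : ∀ k, ∀ β ∈ Metric.ball (0:ℝ) ε, HasDerivAt (fb k) (fb' k β) β := by
    intro k β hβ
    have hd := hDb k β (hmemball β hβ)
    have hDp : (0:ℝ) < αstar * β * τ * γ * lam k + αstar * β * lam k
        + αstar * τ * γ * lam k - αstar * lam k - 2 * β ^ 2 + 2 := by linarith
    have hnum : HasDerivAt (fun β : ℝ => γ * αstar * lam k * (β + 1))
        (γ * αstar * lam k) β := by
      simpa using ((hasDerivAt_id β).add_const 1).const_mul (γ * αstar * lam k)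
    have hden : HasDerivAt (fun β : ℝ => αstar * β * τ * γ * lam k + αstar * β * lam k
        + αstar * τ * γ * lam k - αstar * lam k - 2 * β ^ 2 + 2)
        (αstar * τ * γ * lam k + αstar * lam k - 4 * β) β := by
      have h' : HasDerivAt (fun y : ℝ => (αstar * τ * γ * lam k + αstar * lam k) * y
          - 2 * y ^ 2 + (αstar * τ * γ * lam k - αstar * lam k + 2))
          (αstar * τ * γ * lam k + αstar * lam k - 4 * β) β := by
        have h1 := (hasDerivAt_id β).const_mul (αstar * τ * γ * lam k + αstar * lam k)
        have h2 := (hasDerivAt_pow 2 β).const_mul (2:ℝ)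
        have h := (h1.fun_sub h2).add_const (αstar * τ * γ * lam k - αstar * lam k + 2)
        refine h.congr_deriv ?_
        push_cast
        ring
      exact h'.congr_of_eventuallyEq (Filter.Eventually.of_forall fun y => by ring)
    have hdiv := hnum.div hden hDp.ne'
    simp only [hfbdef, hfb'def]
    exact hdiv
  -- uniform bound on the term derivatives
  have hKsum : Summable (fun k => 28 * (γ * αstar * lam k) / (δ / 2)^2) :=
    (hsum.mul_left (28 * (γ * αstar) / (δ / 2)^2)).congr (fun k => by ring)
  have hfb'bound : ∀ k, ∀ β ∈ Metric.ball (0:ℝ) ε,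
      |fb' k β| ≤ 28 * (γ * αstar * lam k) / (δ / 2)^2 := by
    intro k β hβ
    obtain ⟨hβl, hβu⟩ := abs_lt.mp (hmemball β hβ)
    have hβl1 : (-1:ℝ) ≤ β := by linarith
    have hβu1 : β ≤ 1 := by linarith
    have hβsq : β ^ 2 ≤ 1 := by nlinarith
    have hd := hDb k β (hmemball β hβ)
    have ha := hAk k; have ha0 := hAk0 k
    have hb := hτγk k; have hb0 := hτγk0 k
    have hc0 : 0 ≤ γ * αstar * lam k := mul_nonneg (mul_nonneg hγ₁.le hA0.le) (hlam k)
    simp only [hfb'def]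
    rw [abs_div, abs_pow]
    have hd2 : (δ / 2)^2 ≤ |αstar * β * τ * γ * lam k + αstar * β * lam k
        + αstar * τ * γ * lam k - αstar * lam k - 2 * β ^ 2 + 2| ^ 2 :=
      pow_le_pow_left₀ (by linarith) (hd.trans (le_abs_self _)) 2
    refine div_le_div₀ (by linarith [hc0]) ?_ (by positivity) hd2
    have hden_ub : |αstar * β * τ * γ * lam k + αstar * β * lam k
        + αstar * τ * γ * lam k - αstar * lam k - 2 * β ^ 2 + 2| ≤ 12 := by
      rw [abs_le]
      constructor <;>
        nlinarith [mul_le_mul_of_nonneg_right hβl1 hb0,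
          mul_le_mul_of_nonneg_right hβu1 hb0,
          mul_le_mul_of_nonneg_right hβl1 ha0,
          mul_le_mul_of_nonneg_right hβu1 ha0]
    have hder_ub : |(β + 1) * (αstar * τ * γ * lam k + αstar * lam k - 4 * β)| ≤ 16 := by
      rw [abs_mul]
      have h1 : |β + 1| ≤ 2 := by rw [abs_le]; constructor <;> linarith
      have h2 : |αstar * τ * γ * lam k + αstar * lam k - 4 * β| ≤ 8 := by
        rw [abs_le]; constructor <;> nlinarith
      calc |β + 1| * |αstar * τ * γ * lam k + αstar * lam k - 4 * β|
          ≤ 2 * 8 := mul_le_mul h1 h2 (abs_nonneg _) (by norm_num)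
        _ = 16 := by norm_num
    calc |γ * αstar * lam k * (αstar * β * τ * γ * lam k + αstar * β * lam k
          + αstar * τ * γ * lam k - αstar * lam k - 2 * β ^ 2 + 2)
        - γ * αstar * lam k * (β + 1) * (αstar * τ * γ * lam k + αstar * lam k - 4 * β)|
        ≤ |γ * αstar * lam k * (αstar * β * τ * γ * lam k + αstar * β * lam k
          + αstar * τ * γ * lam k - αstar * lam k - 2 * β ^ 2 + 2)|
          + |γ * αstar * lam k * (β + 1) * (αstar * τ * γ * lam k + αstar * lam k - 4 * β)| :=
          abs_sub _ _
      _ ≤ γ * αstar * lam k * 12 + γ * αstar * lam k * 16 := by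
          have e1 : |γ * αstar * lam k * (αstar * β * τ * γ * lam k + αstar * β * lam k
              + αstar * τ * γ * lam k - αstar * lam k - 2 * β ^ 2 + 2)|
              ≤ γ * αstar * lam k * 12 := by
            rw [abs_mul, abs_of_nonneg hc0]
            exact mul_le_mul_of_nonneg_left hden_ub hc0
          have e2 : |γ * αstar * lam k * (β + 1) * (αstar * τ * γ * lam k
              + αstar * lam k - 4 * β)| ≤ γ * αstar * lam k * 16 := by
            rw [show γ * αstar * lam k * (β + 1) * (αstar * τ * γ * lam k
                + αstar * lam k - 4 * β) = γ * αstar * lam k * ((β + 1) * (αstar * τ * γ * lam k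
                + αstar * lam k - 4 * β)) from by ring, abs_mul, abs_of_nonneg hc0]
            exact mul_le_mul_of_nonneg_left hder_ub hc0
          linarith
      _ = 28 * (γ * αstar * lam k) := by ring
  -- summability of the β-terms on the ball
  have hfbsum : ∀ β ∈ Metric.ball (0:ℝ) ε, Summable (fun k => fb k β) := by
    intro β hβ
    obtain ⟨hβl, hβu⟩ := abs_lt.mp (hmemball β hβ)
    have hβl1 : (-1:ℝ) ≤ β := by linarith
    have hβu1 : β ≤ 1 := by linarith
    have hbsum2 : Summable (fun k => γ * αstar * 2 / (δ / 2) * lam k) :=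
      hsum.mul_left _
    refine Summable.of_nonneg_of_le (fun k => ?_) (fun k => ?_) hbsum2
    · have hd := hDb k β (hmemball β hβ)
      simp only [hfbdef]
      refine div_nonneg ?_ (by linarith)
      have hc0 : 0 ≤ γ * αstar * lam k := mul_nonneg (mul_nonneg hγ₁.le hA0.le) (hlam k)
      nlinarith
    · have hd := hDb k β (hmemball β hβ)
      have hc0 : 0 ≤ γ * αstar * lam k := mul_nonneg (mul_nonneg hγ₁.le hA0.le) (hlam k)
      simp only [hfbdef]
      calc γ * αstar * lam k * (β + 1) /
            (αstar * β * τ * γ * lam k + αstar * β * lam k + αstar * τ * γ * lam k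
              - αstar * lam k - 2 * β ^ 2 + 2)
          ≤ γ * αstar * lam k * 2 / (δ / 2) := by
            refine div_le_div₀ (by linarith [hc0]) (by nlinarith) (by linarith) hd
        _ = γ * αstar * 2 / (δ / 2) * lam k := by ring
  -- derivative of U1 αstar · at 0
  set Uβ' : ℝ := ∑' k, fb' k 0 with hUβ'def
  have hUβ : HasDerivAt (fun β => U1 αstar β) Uβ' 0 := by
    have he : (fun β => U1 αstar β) = fun β => ∑' k, fb k β := funext fun β => hU1 αstar β
    rw [he, hUβ'def]
    exact my_tsum_deriv hsopen h0mem fb fb' _ hKsum hfbderiv hfb'bound hfbsum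
  -- decompose Uβ' = αstar * Vα' - P
  have hg'sumA : Summable (fun k => g' k αstar) :=
    Summable.of_nonneg_of_le
      (fun k => by
        simp only [hg'def]
        exact div_nonneg (mul_nonneg (by positivity) (hlam k)) (by positivity))
      (fun k => (le_abs_self _).trans (hg'bound k αstar hAmem)) hbsum'
  have hD0k : ∀ k, (0:ℝ) < αstar * τ * γ * lam k - αstar * lam k + 2 := hD0pos
  have hPsum : Summable (fun k => 2 * γ * (αstar * lam k)^2 /
      (αstar * τ * γ * lam k - αstar * lam k + 2)^2) := by
    have hbsum3 : Summable (fun k => 4 * γ * αstar / δ^2 * lam k) :=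
      hsum.mul_left _
    refine Summable.of_nonneg_of_le (fun k => ?_) (fun k => ?_) hbsum3
    · exact div_nonneg (by positivity) (by positivity)
    · have hd := hD0δ k
      have ha := hAk k; have ha0 := hAk0 k
      calc 2 * γ * (αstar * lam k)^2 / (αstar * τ * γ * lam k - αstar * lam k + 2)^2
          ≤ 4 * γ * (αstar * lam k) / δ^2 := by
            refine div_le_div₀ (by nlinarith [hlam k]) ?_ (by positivity)
              (pow_le_pow_left₀ hδ0.le hd 2)
            nlinarith [mul_le_mul_of_nonneg_left ha (mul_nonneg hγ₁.le ha0),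
              mul_nonneg (mul_nonneg hγ₁.le ha0) hδ0.le]
        _ = 4 * γ * αstar / δ^2 * lam k := by ring
  have hterm : ∀ k, fb' k 0 = αstar * g' k αstar - 2 * γ * (αstar * lam k)^2 /
      (αstar * τ * γ * lam k - αstar * lam k + 2)^2 := by
    intro k
    have hd := hD0k k
    simp only [hfb'def, hg'def]
    norm_num
    rw [← mul_div_assoc, ← sub_div, div_eq_div_iff (by positivity) (by positivity)]
    ring
  have hP : (0:ℝ) < ∑' k, 2 * γ * (αstar * lam k)^2 /
      (αstar * τ * γ * lam k - αstar * lam k + 2)^2 := by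
    refine Summable.tsum_pos hPsum (fun k => div_nonneg (by positivity) (by positivity)) k₀ ?_
    exact div_pos (mul_pos (by positivity) (pow_pos (mul_pos hA0 hk₀) 2))
      (pow_pos (hD0k k₀) 2)
  have hUβeq : Uβ' = αstar * Vα' - ∑' k, 2 * γ * (αstar * lam k)^2 /
      (αstar * τ * γ * lam k - αstar * lam k + 2)^2 := by
    rw [hUβ'def, tsum_congr hterm, Summable.tsum_sub (hg'sumA.mul_left αstar) hPsum, tsum_mul_left,
      ← hVα'def]
  have hUβlt : Uβ' < ζ * (1 - U1 αstar 0) := by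
    rw [hUβeq]
    linarith [hFOC, hP]
  -- final assembly
  have hN : HasDerivAt (fun β : ℝ => (1 - β) ^ ζ) (-ζ) 0 := by
    have h1 : HasDerivAt (fun x : ℝ => x ^ ζ) (ζ * (1:ℝ) ^ (ζ - 1))
        ((fun β : ℝ => 1 - β) 0) := by
      simpa using Real.hasDerivAt_rpow_const (p := ζ) (x := (1:ℝ)) (Or.inl one_ne_zero)
    have h2 : HasDerivAt (fun β : ℝ => 1 - β) (-1 : ℝ) 0 := by
      simpa using (hasDerivAt_const (0:ℝ) (1:ℝ)).fun_sub (hasDerivAt_id (0:ℝ))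
    have h3 := h1.comp 0 h2
    have : ζ * (1:ℝ) ^ (ζ - 1) * (-1) = -ζ := by
      rw [Real.one_rpow]; ring
    rw [← this]
    simpa [Function.comp_def] using h3
  have hG : HasDerivAt (fun β => 1 - U1 αstar β) (-Uβ') 0 := by
    simpa using (hasDerivAt_const (0:ℝ) (1:ℝ)).fun_sub hUβ
  have hd := hN.div hG h1U.ne'
  refine ⟨_, ?_, hd⟩
  have h10 : ((1:ℝ) - 0) ^ ζ = 1 := by
    norm_num
  refine div_neg_of_neg_of_pos ?_ (pow_pos h1U 2)
  rw [h10]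
  linarith [hUβlt]
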